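/- Let q be a prime power and r ≥ 2, ℓ ≥ 1 integers with (r−1) ∣ (q−1). Regard V = 𝔽_{q^ℓ}^r as an 𝔽_q-vector space; for c ∈ 𝔽_{q^ℓ} let H_c := { x·(1, c, c², …, c^{r−1}) : x ∈ 𝔽_{q^ℓ} }, and for b ∈ 𝔽_{q^ℓ}^× let W_b := { (y_0, …, y_{r−1}) ∈ V : y_{r−1} = b·y_0^q }. Then for every d ∈ 𝔽_{q^ℓ}^×, the number of elements c ∈ 𝔽_{q^ℓ}^× with W_{d^{r−1}} ∩ H_c ≠ {0} is exactly (r−1)·(q^ℓ − 1)/(q − 1). -/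

import Mathlib

open Module Finset
open Polynomial

lemma cyclic_pow_surj {G : Type*} [CommGroup G] [Fintype G] [IsCyclic G] {k : ℕ}
    (hk : k ∣ Fintype.card G) {z : G} (hz : z ^ (Fintype.card G / k) = 1) :
    ∃ x : G, x ^ k = z := by
  obtain ⟨g, hg⟩ := IsCyclic.exists_generator (α := G)
  have hord : orderOf g = Fintype.card G := by
    rw [orderOf_eq_card_of_forall_mem_zpowers hg, Nat.card_eq_fintype_card]
  obtain ⟨i, hi⟩ := (Submonoid.mem_powers_iff _ _).mp (mem_powers_iff_mem_zpowers.mpr (hg z))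
  have hk0 : 0 < k := by
    rcases Nat.eq_zero_or_pos k with h | h
    · subst h; exact absurd (Nat.eq_zero_of_zero_dvd hk) Fintype.card_pos.ne'
    · exact h
  have he : 0 < Fintype.card G / k := Nat.div_pos (Nat.le_of_dvd Fintype.card_pos hk) hk0
  have h1 : Fintype.card G ∣ i * (Fintype.card G / k) := by
    rw [← hord] at hz ⊢
    exact orderOf_dvd_of_pow_eq_one (by rw [pow_mul, hi]; exact hz)
  have h2 : k * (Fintype.card G / k) ∣ i * (Fintype.card G / k) := by
    rwa [Nat.mul_div_cancel' hk]
  have h3 : k ∣ i := (Nat.mul_dvd_mul_iff_right he).mp h2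
  obtain ⟨j, rfl⟩ := h3
  exact ⟨g ^ j, by rw [← pow_mul, mul_comm j k]; exact hi⟩

/-- Lemma: each repair subspace `W_{d^{r-1}}` hits exactly one full block.
Assume `(r-1) ∣ (q-1)`. In `V = E^r` over `F`, with
`H_c = { x·(1, c, …, c^{r-1}) }` and `W_b = { y : y_{r-1} = b·y_0^q }`, for every
`d ∈ E^×` the number of `c ∈ E^×` with `W_{d^{r-1}} ∩ H_c ≠ {0}` is exactly
`(r-1)·(q^ℓ-1)/(q-1)`. -/
theorem Wb_hits_exactly_one_block
    (q r ℓ : ℕ) (hr : 2 ≤ r) (hℓ : 1 ≤ ℓ) (hdvd : (r - 1) ∣ (q - 1))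
    (F E : Type*) [Field F] [Fintype F] [Field E] [Fintype E] [Algebra F E]
    (hq : Fintype.card F = q) (hE : Fintype.card E = q ^ ℓ)
    (d : E) (hd : d ≠ 0) :
    Nat.card {c : E | c ≠ 0 ∧
        ∃ v : Fin r → E, v ≠ 0 ∧
          v ⟨r - 1, by omega⟩ = d ^ (r - 1) * (v ⟨0, by omega⟩) ^ q ∧
          ∃ x : E, v = fun k : Fin r => x * c ^ (k : ℕ)}
      = (r - 1) * ((q ^ ℓ - 1) / (q - 1)) := by
  classical
  have hq2 : 2 ≤ q := hq ▸ Fintype.one_lt_card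
  set n : ℕ := q ^ ℓ - 1 with hn_def
  have hn : Fintype.card Eˣ = n := by rw [Fintype.card_units, hE]
  have hkn : (q - 1) ∣ n := by
    have := Nat.sub_dvd_pow_sub_pow q 1 ℓ
    simpa using this
  set t : ℕ := (r - 1) * (n / (q - 1)) with ht_def
  have hn0 : 0 < n := by
    have : 1 < q ^ ℓ := Nat.one_lt_pow (by omega) hq2
    omega
  have ht0 : 0 < t := by
    have h1 : 0 < n / (q - 1) :=
      Nat.div_pos (Nat.le_of_dvd hn0 hkn) (by omega)
    have : 0 < r - 1 := by omega
    positivity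
  have htn : t ∣ n := by
    have : t ∣ (q - 1) * (n / (q - 1)) := mul_dvd_mul_right hdvd _
    rwa [Nat.mul_div_cancel' hkn] at this
  have hpow : ∀ z : E, z ^ q = z ^ (q - 1) * z := by
    intro z
    rw [← pow_succ]
    congr 1
    omega
  have hset : {c : E | c ≠ 0 ∧
        ∃ v : Fin r → E, v ≠ 0 ∧
          v ⟨r - 1, by omega⟩ = d ^ (r - 1) * (v ⟨0, by omega⟩) ^ q ∧
          ∃ x : E, v = fun k : Fin r => x * c ^ (k : ℕ)}
      = ↑((nthRootsFinset t (1 : E)).image (· * d)) := by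
    ext c
    simp only [Set.mem_setOf_eq, Finset.coe_image, Set.mem_image, Finset.mem_coe,
      Polynomial.mem_nthRootsFinset ht0]
    constructor
    · rintro ⟨hc, v, hv0, heq, x, rfl⟩
      have hx0 : x ≠ 0 := by
        rintro rfl
        exact hv0 (funext fun k => by simp)
      simp only [pow_zero, mul_one] at heq
      have key : c ^ (r - 1) = d ^ (r - 1) * x ^ (q - 1) :=
        mul_right_cancel₀ hx0 (by rw [mul_assoc, ← hpow x, ← heq]; exact mul_comm _ _)
      have hxn : x ^ n = 1 := by
        have := FiniteField.pow_card_sub_one_eq_one x hx0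
        rwa [hE] at this
      have hct : c ^ t = d ^ t := by
        calc c ^ t = (c ^ (r - 1)) ^ (n / (q - 1)) := by rw [← pow_mul]
          _ = (d ^ (r - 1)) ^ (n / (q - 1)) * (x ^ (q - 1)) ^ (n / (q - 1)) := by
              rw [key, mul_pow]
          _ = d ^ t * x ^ ((q - 1) * (n / (q - 1))) := by rw [← pow_mul, ← pow_mul]
          _ = d ^ t := by rw [Nat.mul_div_cancel' hkn, hxn, mul_one]
      refine ⟨c * d⁻¹, ?_, by field_simp⟩
      rw [mul_pow, hct, ← mul_pow, mul_inv_cancel₀ hd, one_pow]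
    · rintro ⟨y, hy1, rfl⟩
      have hy0 : y ≠ 0 := by
        rintro rfl
        rw [zero_pow ht0.ne'] at hy1
        exact zero_ne_one hy1
      have hc : y * d ≠ 0 := mul_ne_zero hy0 hd
      set u : Eˣ := Units.mk0 (y * d) hc with hu
      set w : Eˣ := Units.mk0 d hd with hw
      have hval : ((u * w⁻¹ : Eˣ) : E) = y := by
        rw [Units.val_mul, hu, hw, Units.val_inv_eq_inv_val, Units.val_mk0, Units.val_mk0,
          mul_inv_cancel_right₀ hd]
      have hz : ((u * w⁻¹) ^ (r - 1)) ^ (Fintype.card Eˣ / (q - 1)) = 1 := by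
        rw [hn, ← pow_mul]
        exact Units.ext (by rw [Units.val_pow_eq_pow_val, hval, Units.val_one]; exact hy1)
      obtain ⟨xu, hxu⟩ := cyclic_pow_surj (hn ▸ hkn) hz
      have hx : (xu : E) ^ (q - 1) = y ^ (r - 1) := by
        have := congrArg Units.val hxu
        rwa [Units.val_pow_eq_pow_val, Units.val_pow_eq_pow_val, hval] at this
      refine ⟨hc, fun k : Fin r => (xu : E) * (y * d) ^ (k : ℕ), ?_, ?_, (xu : E), rfl⟩
      · intro h
        have := congrFun h ⟨0, by omega⟩
        simp only [pow_zero, mul_one, Pi.zero_apply] at this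
        exact xu.ne_zero this
      · show (xu : E) * (y * d) ^ (r - 1) = d ^ (r - 1) * ((xu : E) * (y * d) ^ (0 : ℕ)) ^ q
        rw [pow_zero, mul_one, hpow ((xu : E)), hx, mul_pow]
        ring
  rw [hset, Nat.card_coe_set_eq, Set.ncard_coe_finset,
    Finset.card_image_of_injective _ (mul_left_injective₀ hd)]
  obtain ⟨g, hg⟩ := IsCyclic.exists_generator (α := Eˣ)
  have hordg : orderOf (g : E) = n := by
    rw [orderOf_units, orderOf_eq_card_of_forall_mem_zpowers hg, Nat.card_eq_fintype_card, hn]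
  have hprim : IsPrimitiveRoot (g : E) n := hordg ▸ IsPrimitiveRoot.orderOf (g : E)
  have hprimt : IsPrimitiveRoot ((g : E) ^ (n / t)) t :=
    hprim.pow hn0 (Nat.div_mul_cancel htn).symm
  rw [hprimt.card_nthRootsFinset]
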